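/- arXiv:1905.03857 — 5 statements merged into one kernel-verified Lean document; each statement's English description precedes it below -/
import Mathlib

section
/- Let K ≥ 2 be a natural number and let g, ρ : Fin K → ℕ be two monotone nondecreasing (sorted) vectors of natural numbers. If g is strictly smaller than ρ in the lexicographic order on Fin K → ℕ, then ξ(g) > ξ(ρ), i.e., ∑_{k} K^{−g(k)} > ∑_{k} K^{−ρ(k)} as real numbers. -/
/-- The separable objective `ξ(v) = ∑ k, K^{-v k}`. -/
noncomputable def xi (K : ℕ) (v : Fin K → ℕ) : ℝ :=
  ∑ k : Fin K, ((K : ℝ))⁻¹ ^ v k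

/-- Strict-inequality direction of Lemma 2: on sorted vectors, `ξ` strictly
reverses the lexicographic order. -/
theorem stmt_1 (K : ℕ) (hK : 2 ≤ K) (g ρ : Fin K → ℕ)
    (hg : Monotone g) (hρ : Monotone ρ)
    (hlt : toLex g < toLex ρ) :
    xi K g > xi K ρ := by
  obtain ⟨i, hpre, hi⟩ := hlt
  simp only [Pi.toLex_apply] at hpre hi
  set x : ℝ := (K : ℝ)⁻¹ with hxdef
  have hK0 : (0:ℝ) < K := by positivity
  have hx0 : 0 < x := by positivity
  have hKx : (K : ℝ) * x = 1 := mul_inv_cancel₀ (ne_of_gt hK0)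
  -- rewrite the difference as a sum over `Ici i`
  have hsub : (Finset.Ici i : Finset (Fin K)) ⊆ Finset.univ := Finset.subset_univ _
  have key : xi K g - xi K ρ
      = (x ^ g i - x ^ ρ i) + ∑ k ∈ Finset.Ioi i, (x ^ g k - x ^ ρ k) := by
    rw [xi, xi, ← Finset.sum_sub_distrib,
      ← Finset.sum_subset hsub (fun k _ hk => by
        rw [hpre k (lt_of_not_ge (by simpa using hk))]; ring),
      ← Finset.Ioi_insert, Finset.sum_insert (Finset.notMem_Ioi_self)]
  -- basic bounds
  have hρi : g i + 1 ≤ ρ i := hi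
  have hK2 : (2:ℝ) ≤ (K:ℝ) := by exact_mod_cast hK
  have hx1 : x ≤ 1 := by nlinarith
  have hxρi : x ^ ρ i ≤ x ^ (g i + 1) := pow_le_pow_of_le_one hx0.le hx1 hρi
  set c : ℕ := (Finset.Ioi i : Finset (Fin K)).card with hc
  have hcard : c = K - 1 - i := by
    rw [hc, Fin.card_Ioi]
  have hsum_ρ : ∑ k ∈ Finset.Ioi i, x ^ ρ k ≤ (c : ℝ) * x ^ (g i + 1) := by
    calc ∑ k ∈ Finset.Ioi i, x ^ ρ k ≤ ∑ k ∈ Finset.Ioi i, x ^ (g i + 1) := by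
            apply Finset.sum_le_sum
            intro k hk
            exact pow_le_pow_of_le_one hx0.le hx1 (le_trans hρi (hρ (le_of_lt (Finset.mem_Ioi.mp hk))))
      _ = (c : ℝ) * x ^ (g i + 1) := by rw [Finset.sum_const, nsmul_eq_mul]
  have hT : (0:ℝ) ≤ ∑ k ∈ Finset.Ioi i, x ^ g k :=
    Finset.sum_nonneg fun k _ => (pow_pos hx0 _).le
  have hKpow : (K : ℝ) * x ^ (g i + 1) = x ^ g i := by
    rw [pow_succ, ← mul_assoc, mul_comm ((K:ℝ)), mul_assoc, hKx, mul_one]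
  have hsplit : ∑ k ∈ Finset.Ioi i, (x ^ g k - x ^ ρ k)
      = ∑ k ∈ Finset.Ioi i, x ^ g k - ∑ k ∈ Finset.Ioi i, x ^ ρ k :=
    Finset.sum_sub_distrib _ _
  rw [gt_iff_lt, ← sub_pos, key, hsplit]
  by_cases hi0 : (i : ℕ) = 0
  · -- first coordinate differs: the tail sum over `Ioi i` is strictly positive
    have hc' : (c : ℝ) = (K : ℝ) - 1 := by
      have : c = K - 1 := by omega
      rw [this]
      push_cast [Nat.cast_sub (by omega : 1 ≤ K)]
      ring
    have hTpos : (0:ℝ) < ∑ k ∈ Finset.Ioi i, x ^ g k := by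
      apply Finset.sum_pos (fun k _ => pow_pos hx0 _)
      refine ⟨⟨1, by omega⟩, Finset.mem_Ioi.mpr ?_⟩
      rw [Fin.lt_def, hi0]
      norm_num
    nlinarith [pow_pos hx0 (g i + 1)]
  · -- later coordinate: slack from `c + 1 < K`
    have hcK : (c : ℝ) + 1 ≤ (K : ℝ) - 1 := by
      have : c + 1 ≤ K - 1 := by omega
      have := (Nat.cast_le (α := ℝ)).mpr this
      push_cast [Nat.cast_sub (by omega : 1 ≤ K)] at this
      linarith
    nlinarith [pow_pos hx0 (g i + 1)]
end

section
/- Let K ≥ 2 be a natural number and let g, ρ : Fin K → ℕ be monotone nondecreasing (sorted) vectors. Then g ≤ ρ in the lexicographic order on Fin K → ℕ if and only if ξ(g) ≥ ξ(ρ), i.e., ∑_{k} K^{−g(k)} ≥ ∑_{k} K^{−ρ(k)}. -/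
lemma xi_strict (K : ℕ) (hK : 2 ≤ K) (g ρ : Fin K → ℕ)
    (hg : Monotone g) (hρ : Monotone ρ) (h : toLex g < toLex ρ) :
    xi K ρ < xi K g := by
  obtain ⟨i, hj, hi⟩ := h
  set x : ℝ := ((K : ℝ))⁻¹ with hx
  have hK0 : (0:ℝ) < (K:ℝ) := by positivity
  have hx0 : 0 < x := by positivity
  have hx1 : x < 1 := by
    rw [hx, inv_lt_one_iff₀]; right; exact_mod_cast lt_of_lt_of_le one_lt_two hK
  have hxle1 : x ≤ 1 := le_of_lt hx1
  set S : Finset (Fin K) := Finset.univ.filter (fun k => ¬ k < i) with hS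
  have hiS : i ∈ S := by simp [hS]
  have hsplit : ∀ v : Fin K → ℕ,
      xi K v = ∑ k ∈ Finset.univ.filter (fun k => k < i), x ^ v k + ∑ k ∈ S, x ^ v k :=
    fun v => (Finset.sum_filter_add_sum_filter_not _ _ _).symm
  rw [hsplit g, hsplit ρ]
  have heq : ∑ k ∈ Finset.univ.filter (fun k => k < i), x ^ ρ k
      = ∑ k ∈ Finset.univ.filter (fun k => k < i), x ^ g k := by
    refine Finset.sum_congr rfl fun j hjm => ?_
    have : g j = ρ j := hj j (by simpa using hjm)
    rw [this]
  rw [heq]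
  refine (add_lt_add_iff_left _).mpr ?_
  have hterm : ∀ k ∈ S, x ^ ρ k ≤ x ^ (g i + 1) := by
    intro k hk
    apply pow_le_pow_of_le_one (le_of_lt hx0) hxle1
    have hik : i ≤ k := not_lt.mp (by simpa [hS] using hk)
    calc g i + 1 ≤ ρ i := hi
      _ ≤ ρ k := hρ hik
  by_cases hlast : ∃ k : Fin K, i < k
  · obtain ⟨k0, hk0⟩ := hlast
    have hLHS : ∑ k ∈ S, x ^ ρ k ≤ (S.card : ℝ) * x ^ (g i + 1) := by
      calc ∑ k ∈ S, x ^ ρ k ≤ ∑ _k ∈ S, x ^ (g i + 1) := Finset.sum_le_sum hterm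
        _ = (S.card : ℝ) * x ^ (g i + 1) := by rw [Finset.sum_const, nsmul_eq_mul]
    have hcard : ((S.card : ℝ)) ≤ (K : ℝ) := by
      have : S.card ≤ K := by
        calc S.card ≤ (Finset.univ : Finset (Fin K)).card :=
              Finset.card_le_card (Finset.subset_univ _)
          _ = K := by simp
      exact_mod_cast this
    have h1 : (S.card : ℝ) * x ^ (g i + 1) ≤ x ^ g i := by
      calc (S.card : ℝ) * x ^ (g i + 1) ≤ (K : ℝ) * x ^ (g i + 1) :=
            mul_le_mul_of_nonneg_right hcard (by positivity)
        _ = ((K : ℝ) * x) * x ^ g i := by ring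
        _ = x ^ g i := by rw [hx, mul_inv_cancel₀ (ne_of_gt hK0), one_mul]
    have h2 : x ^ g i < ∑ k ∈ S, x ^ g k := by
      rw [← Finset.add_sum_erase S _ hiS]
      have hmem : k0 ∈ S.erase i :=
        Finset.mem_erase.mpr ⟨ne_of_gt hk0, by simp [hS, not_lt, le_of_lt hk0]⟩
      have hpos : 0 < ∑ k ∈ S.erase i, x ^ g k :=
        Finset.sum_pos (fun k _ => by positivity) ⟨k0, hmem⟩
      linarith
    linarith
  · push_neg at hlast
    have hsing : S = {i} := by
      ext k
      simp only [hS, Finset.mem_filter, Finset.mem_univ, true_and, Finset.mem_singleton, not_lt]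
      exact ⟨fun hk => le_antisymm (hlast k) hk, fun hk => hk ▸ le_rfl⟩
    rw [hsing, Finset.sum_singleton, Finset.sum_singleton]
    calc x ^ ρ i ≤ x ^ (g i + 1) := hterm i hiS
      _ = x ^ g i * x := by ring
      _ < x ^ g i * 1 := mul_lt_mul_of_pos_left hx1 (by positivity)
      _ = x ^ g i := mul_one _

/-- Lemma 2 of the paper: on sorted vectors, `ξ` reverses the lexicographic order:
`g ≤ ρ` lexicographically iff `ξ(g) ≥ ξ(ρ)`. -/
theorem stmt_2 (K : ℕ) (hK : 2 ≤ K) (g ρ : Fin K → ℕ)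
    (hg : Monotone g) (hρ : Monotone ρ) :
    toLex g ≤ toLex ρ ↔ xi K g ≥ xi K ρ := by
  constructor
  · intro h
    rcases h.lt_or_eq with h | h
    · exact le_of_lt (xi_strict K hK g ρ hg hρ h)
    · have : g = ρ := by
        funext k; exact congrFun (congrArg ofLex h) k
      rw [this]
  · intro h
    by_contra hc
    haveI : WellFoundedLT (Fin K) := Finite.to_wellFoundedLT
    have hgt : toLex ρ < toLex g := lt_of_not_ge hc
    have := xi_strict K hK ρ g hρ hg hgt
    linarith
end

section
/- Let K ≥ 2 be a natural number and let S be a finite nonempty set of monotone nondecreasing (sorted) vectors in Fin K → ℕ. For v ∈ S, the following are equivalent: (1) v minimizes ξ over S, i.e., ξ(v) ≤ ξ(w) for all w ∈ S; (2) v is lexicographically maximal in S, i.e., w ≤ v in the lexicographic order for all w ∈ S. -/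
lemma xi_key (K : ℕ) (hK : 2 ≤ K) (v w : Fin K → ℕ) (hv : Monotone v)
    (h : toLex w < toLex v) : xi K v < xi K w := by
  obtain ⟨i, hpre, hi⟩ := h
  have hi' : w i < v i := hi
  set r : ℝ := ((K : ℝ))⁻¹ with hr
  have hK0 : (0:ℝ) < K := by positivity
  have hr0 : 0 < r := by positivity
  have hr1 : r < 1 := by
    rw [hr, inv_lt_one_iff₀]
    right; exact_mod_cast lt_of_lt_of_le one_lt_two hK
  have hsplit : ∀ u : Fin K → ℕ, xi K u =
      (∑ k ∈ Finset.univ.filter (fun k : Fin K => k < i), r ^ u k) +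
      (∑ k ∈ Finset.univ.filter (fun k : Fin K => ¬ k < i), r ^ u k) := by
    intro u
    rw [xi, Finset.sum_filter_add_sum_filter_not]
  rw [hsplit v, hsplit w]
  have hprefix : (∑ k ∈ Finset.univ.filter (fun k : Fin K => k < i), r ^ v k) =
      ∑ k ∈ Finset.univ.filter (fun k : Fin K => k < i), r ^ w k := by
    apply Finset.sum_congr rfl
    intro j hj
    rw [Finset.mem_filter] at hj
    exact congrArg (fun n => r ^ n) (hpre j hj.2).symm
  rw [hprefix]
  apply add_lt_add_right
  -- tails
  have htailv : ∀ k : Fin K, ¬ k < i → r ^ v k ≤ r ^ (w i + 1) := by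
    intro k hk
    apply pow_le_pow_of_le_one hr0.le hr1.le
    have : v i ≤ v k := hv (not_lt.mp hk)
    omega
  by_cases hlast : (i : ℕ) + 1 = K
  · -- i is the last index: the tail is just {i}
    have hset : Finset.univ.filter (fun k : Fin K => ¬ k < i) = {i} := by
      ext k
      simp only [Finset.mem_filter, Finset.mem_univ, true_and, Finset.mem_singleton, not_lt,
        Fin.le_def, Fin.ext_iff]
      have := k.isLt
      omega
    rw [hset, Finset.sum_singleton, Finset.sum_singleton]
    exact pow_lt_pow_right_of_lt_one₀ hr0 hr1 hi'
  · -- there is another index j = K-1 > i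
    have hiK : (i : ℕ) + 1 < K := lt_of_le_of_ne i.isLt hlast
    set j : Fin K := ⟨K - 1, by omega⟩ with hj
    calc (∑ k ∈ Finset.univ.filter (fun k : Fin K => ¬ k < i), r ^ v k)
        ≤ (Finset.univ.filter (fun k : Fin K => ¬ k < i)).card • r ^ (w i + 1) :=
          Finset.sum_le_card_nsmul _ _ _ (fun k hk => htailv k (Finset.mem_filter.mp hk).2)
      _ ≤ K • r ^ (w i + 1) := by
          apply nsmul_le_nsmul_left (by positivity)
          calc (Finset.univ.filter (fun k : Fin K => ¬ k < i)).card
              ≤ Finset.univ.card := Finset.card_filter_le _ _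
            _ = K := by simp
      _ = r ^ (w i) := by
          rw [nsmul_eq_mul, pow_succ', ← mul_assoc]
          rw [hr, mul_inv_cancel₀ (ne_of_gt hK0), one_mul]
      _ < r ^ (w i) + r ^ (w j) := by
          have : (0:ℝ) < r ^ (w j) := by positivity
          linarith
      _ = ∑ k ∈ ({i, j} : Finset (Fin K)), r ^ w k := by
          rw [Finset.sum_pair]
          intro hij
          rw [hij] at hiK
          simp [hj] at hiK
          omega
      _ ≤ (∑ k ∈ Finset.univ.filter (fun k : Fin K => ¬ k < i), r ^ w k) := by
          apply Finset.sum_le_sum_of_subset_of_nonneg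
          · intro k hk
            simp only [Finset.mem_insert, Finset.mem_singleton] at hk
            simp only [Finset.mem_filter, Finset.mem_univ, true_and, not_lt]
            rcases hk with rfl | rfl
            · exact le_refl _
            · rw [Fin.le_def]; simp [hj]; omega
          · intro k _ _; positivity

lemma lex_of_not_le (K : ℕ) (v w : Fin K → ℕ) (h : ¬ toLex w ≤ toLex v) :
    toLex v < toLex w := by
  rcases @trichotomous _ _ (Pi.isTrichotomous_lex (fun (a b : Fin K) => a < b) (fun {_} => (· < ·))
      (IsWellFounded.wf)) v w with h1 | h1 | h1
  · exact h1
  · exact absurd (le_of_eq (congrArg toLex h1.symm)) h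
  · exact absurd (le_of_lt (show toLex w < toLex v from h1)) h

/-- Over a finite nonempty set of sorted vectors, minimizing `ξ` is equivalent to
lexicographic maximization. -/
theorem stmt_4 (K : ℕ) (hK : 2 ≤ K) (S : Finset (Fin K → ℕ)) (hS : S.Nonempty)
    (hsorted : ∀ w ∈ S, Monotone w) (v : Fin K → ℕ) (hv : v ∈ S) :
    (∀ w ∈ S, xi K v ≤ xi K w) ↔ (∀ w ∈ S, toLex w ≤ toLex v) := by
  constructor
  · intro hmin w hw
    by_contra hwv
    have hlt : toLex v < toLex w := lex_of_not_le K v w hwv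
    have := xi_key K hK w v (hsorted w hw) hlt
    exact absurd (hmin w hw) (not_le.mpr this)
  · intro hmax w hw
    rcases eq_or_lt_of_le (hmax w hw) with heq | hlt
    · have : w = v := congrArg ofLex heq
      rw [this]
    · exact (xi_key K hK v w (hsorted v hv) hlt).le
end

section
/- Let N and J be natural numbers and let P be the set of real N × J matrices x such that x(n,j) ≥ 0 for all n, j; ∑_{j} x(n,j) = 1 for every row n; and ∑_{n} x(n,j) ≤ 1 for every column j. Then every extreme point of the convex set P has all its entries in {0,1}. -/
open Finset

private lemma permMatrix_entry_01 {α : Type*} [DecidableEq α] (σ : Equiv.Perm α) (a b : α) :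
    σ.permMatrix ℝ a b = 0 ∨ σ.permMatrix ℝ a b = 1 := by
  simp only [Equiv.Perm.permMatrix, PEquiv.toMatrix_apply]
  split <;> simp

private lemma convexP (N J : ℕ) :
    Convex ℝ {x : Matrix (Fin N) (Fin J) ℝ |
      (∀ n j, 0 ≤ x n j) ∧ (∀ n, ∑ j, x n j = 1) ∧ (∀ j, ∑ n, x n j ≤ 1)} := by
  rintro u ⟨hu0, hu1, hu2⟩ v ⟨hv0, hv1, hv2⟩ a b ha hb hab
  refine ⟨fun n j => ?_, fun n => ?_, fun j => ?_⟩
  · exact add_nonneg (mul_nonneg ha (hu0 n j)) (mul_nonneg hb (hv0 n j))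
  · simp only [Matrix.add_apply, Matrix.smul_apply, smul_eq_mul, Finset.sum_add_distrib,
      ← Finset.mul_sum, hu1 n, hv1 n]
    linarith
  · simp only [Matrix.add_apply, Matrix.smul_apply, smul_eq_mul, Finset.sum_add_distrib,
      ← Finset.mul_sum]
    nlinarith [hu2 j, hv2 j]

/-- Integrality of the relaxed selection polytope: every extreme point of the
polytope of doubly-substochastic selection matrices (rows sum to exactly 1,
columns sum to at most 1, entries nonnegative) has all entries in `{0,1}`. -/
theorem stmt_8 (N J : ℕ)
    (P : Set (Matrix (Fin N) (Fin J) ℝ))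
    (hP : P = {x | (∀ n j, 0 ≤ x n j) ∧ (∀ n, ∑ j, x n j = 1) ∧ (∀ j, ∑ n, x n j ≤ 1)})
    (x : Matrix (Fin N) (Fin J) ℝ) (hx : x ∈ Set.extremePoints ℝ P) :
    ∀ n j, x n j = 0 ∨ x n j = 1 := by
  subst hP
  rw [mem_extremePoints] at hx
  obtain ⟨⟨hpos, hrow, hcol⟩, hext⟩ := hx
  intro n0 j0
  have hNpos : 0 < (N : ℝ) := by
    have : 0 < N := n0.pos
    exact_mod_cast this
  have hNne : (N : ℝ) ≠ 0 := ne_of_gt hNpos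
  -- column sums
  set c : Fin J → ℝ := fun j => ∑ n, x n j with hc
  have hc0 : ∀ j, 0 ≤ c j := fun j => Finset.sum_nonneg fun n _ => hpos n j
  have hc1 : ∀ j, c j ≤ 1 := hcol
  have hcsum : ∑ j, c j = (N : ℝ) := by
    simp only [hc]
    rw [Finset.sum_comm]
    simp [hrow]
  -- the doubly stochastic completion
  set M : Matrix (Fin N ⊕ Fin J) (Fin N ⊕ Fin J) ℝ := fun a b =>
    match a, b with
    | Sum.inl n, Sum.inr j => x n j
    | Sum.inl _, Sum.inl _ => 0
    | Sum.inr j, Sum.inl _ => c j / N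
    | Sum.inr j, Sum.inr j' => if j = j' then 1 - c j else 0
    with hMdef
  have hM : M ∈ doublyStochastic ℝ (Fin N ⊕ Fin J) := by
    rw [mem_doublyStochastic_iff_sum]
    refine ⟨?_, ?_, ?_⟩
    · rintro (n | j) (i | j') <;> simp only [hMdef]
      · exact le_refl 0
      · exact hpos n j'
      · exact div_nonneg (hc0 j) hNpos.le
      · split
        · linarith [hc1 j]
        · exact le_refl 0
    · rintro (n | j)
      · rw [Fintype.sum_sum_type]
        simp only [hMdef]
        simpa using hrow n
      · rw [Fintype.sum_sum_type]
        simp only [hMdef]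
        rw [Finset.sum_const, Finset.sum_ite_eq]
        simp only [Finset.card_univ, Fintype.card_fin, Finset.mem_univ, if_true,
          nsmul_eq_mul]
        field_simp
        ring
    · rintro (i | j)
      · rw [Fintype.sum_sum_type]
        simp only [hMdef]
        rw [← Finset.sum_div, hcsum]
        field_simp
        simp
      · rw [Fintype.sum_sum_type]
        simp only [hMdef]
        have : ∑ j' : Fin J, (if j' = j then 1 - c j' else 0) = 1 - c j := by
          rw [Finset.sum_ite_eq']
          simp
        rw [this]
        simp [hc]
  -- Birkhoff decomposition
  obtain ⟨w, hw0, hw1, hwM⟩ := exists_eq_sum_perm_of_mem_doublyStochastic hM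
  -- projections of permutation matrices
  set Y : Equiv.Perm (Fin N ⊕ Fin J) → Matrix (Fin N) (Fin J) ℝ :=
    fun σ => fun n j => σ.permMatrix ℝ (Sum.inl n) (Sum.inr j) with hYdef
  have hY01 : ∀ σ n j, Y σ n j = 0 ∨ Y σ n j = 1 := fun σ n j =>
    permMatrix_entry_01 σ _ _
  have hY0 : ∀ σ n j, 0 ≤ Y σ n j := by
    intro σ n j
    rcases hY01 σ n j with h | h <;> rw [h] <;> norm_num
  have hYrow_le : ∀ σ n, ∑ j, Y σ n j ≤ 1 := by
    intro σ n
    have h1 : ∑ b, σ.permMatrix ℝ (Sum.inl n) b = 1 :=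
      sum_row_of_mem_doublyStochastic permMatrix_mem_doublyStochastic _
    rw [Fintype.sum_sum_type] at h1
    have h2 : (0:ℝ) ≤ ∑ i : Fin N, σ.permMatrix ℝ (Sum.inl n) (Sum.inl i) :=
      Finset.sum_nonneg fun i _ =>
        nonneg_of_mem_doublyStochastic permMatrix_mem_doublyStochastic
    simp only [hYdef]
    linarith
  have hYcol_le : ∀ σ j, ∑ n, Y σ n j ≤ 1 := by
    intro σ j
    have h1 : ∑ b, σ.permMatrix ℝ b (Sum.inr j) = 1 :=
      sum_col_of_mem_doublyStochastic permMatrix_mem_doublyStochastic _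
    rw [Fintype.sum_sum_type] at h1
    have h2 : (0:ℝ) ≤ ∑ i : Fin J, σ.permMatrix ℝ (Sum.inr i) (Sum.inr j) :=
      Finset.sum_nonneg fun i _ =>
        nonneg_of_mem_doublyStochastic permMatrix_mem_doublyStochastic
    simp only [hYdef]
    linarith
  -- x is the weighted sum of the projections
  have hxsum : ∀ n j, x n j = ∑ σ, w σ * Y σ n j := by
    intro n j
    have := congrFun (congrFun hwM (Sum.inl n)) (Sum.inr j)
    simp only [Matrix.sum_apply, Matrix.smul_apply, smul_eq_mul] at this
    exact this.symm
  -- for σ with positive weight, rows of Y σ sum to exactly 1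
  have hYrow_eq : ∀ σ, w σ ≠ 0 → ∀ n, ∑ j, Y σ n j = 1 := by
    intro σ hσ n
    have hzero : ∑ τ : Equiv.Perm (Fin N ⊕ Fin J), w τ * (1 - ∑ j, Y τ n j) = 0 := by
      have h1 : ∑ τ : Equiv.Perm (Fin N ⊕ Fin J), w τ * (1 - ∑ j, Y τ n j)
          = (∑ τ, w τ) - ∑ τ, ∑ j, w τ * Y τ n j := by
        rw [← Finset.sum_sub_distrib]
        apply Finset.sum_congr rfl
        intro τ _
        rw [mul_sub, mul_one, Finset.mul_sum]
      rw [h1, hw1, Finset.sum_comm]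
      have h2 : ∑ j, ∑ τ, w τ * Y τ n j = ∑ j, x n j := by
        apply Finset.sum_congr rfl
        intro j _
        exact (hxsum n j).symm
      rw [h2, hrow n]
      ring
    have hnn : ∀ τ ∈ Finset.univ, 0 ≤ w τ * (1 - ∑ j, Y τ n j) := by
      intro τ _
      exact mul_nonneg (hw0 τ) (by linarith [hYrow_le τ n])
    have := (Finset.sum_eq_zero_iff_of_nonneg hnn).1 hzero σ (Finset.mem_univ σ)
    rcases mul_eq_zero.1 this with h | h
    · exact absurd h hσ
    · linarith
  -- positive-weight projections lie in P
  have hYP : ∀ σ, w σ ≠ 0 → Y σ ∈ {x : Matrix (Fin N) (Fin J) ℝ |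
      (∀ n j, 0 ≤ x n j) ∧ (∀ n, ∑ j, x n j = 1) ∧ (∀ j, ∑ n, x n j ≤ 1)} := by
    intro σ hσ
    exact ⟨hY0 σ, hYrow_eq σ hσ, hYcol_le σ⟩
  -- restrict to positive weights
  classical
  set t : Finset (Equiv.Perm (Fin N ⊕ Fin J)) := Finset.univ.filter (fun σ => w σ ≠ 0)
    with ht
  have hwt : ∑ σ ∈ t, w σ = 1 := by
    rw [ht, Finset.sum_filter_ne_zero, hw1]
  have hxt : x = ∑ σ ∈ t, w σ • Y σ := by
    funext n j
    rw [hxsum n j]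
    rw [show (∑ σ ∈ t, w σ • Y σ) n j = ∑ σ ∈ t, w σ * Y σ n j by
      simp [Matrix.sum_apply, Matrix.smul_apply]]
    rw [ht]
    rw [Finset.sum_filter_of_ne]
    intro τ _ h
    intro h0
    rw [h0] at h
    simp at h
  obtain ⟨σ0, _, hσ0⟩ : ∃ σ ∈ (Finset.univ : Finset (Equiv.Perm (Fin N ⊕ Fin J))),
      w σ ≠ 0 := Finset.exists_ne_zero_of_sum_ne_zero (by rw [hw1]; norm_num)
  have hσ0t : σ0 ∈ t := by rw [ht]; simp [hσ0]
  have hwpos : 0 < w σ0 := lt_of_le_of_ne (hw0 σ0) (Ne.symm hσ0)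
  have hwle : w σ0 ≤ 1 := by
    rw [← hwt]
    exact Finset.single_le_sum (fun τ hτ => hw0 τ) hσ0t
  have hYeq : Y σ0 = x := by
    rcases eq_or_lt_of_le hwle with heq | hlt
    · -- weight 1 : all other weights vanish
      have herase : ∑ σ ∈ t.erase σ0, w σ = 0 := by
        rw [Finset.sum_erase_eq_sub hσ0t, hwt, heq]
        ring
      have hz : ∀ σ ∈ t.erase σ0, w σ = 0 :=
        (Finset.sum_eq_zero_iff_of_nonneg (fun τ _ => hw0 τ)).1 herase
      funext n j
      rw [hxt]
      rw [show (∑ σ ∈ t, w σ • Y σ) n j = ∑ σ ∈ t, w σ * Y σ n j by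
        simp [Matrix.sum_apply, Matrix.smul_apply]]
      rw [← Finset.add_sum_erase _ _ hσ0t]
      rw [Finset.sum_eq_zero (fun τ hτ => by rw [hz τ hτ]; ring)]
      rw [heq]
      ring
    · -- weight strictly less than 1 : use extremality
      have hsum_pos : 0 < ∑ σ ∈ t.erase σ0, w σ := by
        rw [Finset.sum_erase_eq_sub hσ0t, hwt]
        linarith
      set z : Matrix (Fin N) (Fin J) ℝ := (t.erase σ0).centerMass w Y with hzdef
      have hzP : z ∈ {x : Matrix (Fin N) (Fin J) ℝ |
          (∀ n j, 0 ≤ x n j) ∧ (∀ n, ∑ j, x n j = 1) ∧ (∀ j, ∑ n, x n j ≤ 1)} := by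
        apply (convexP N J).centerMass_mem (fun τ _ => hw0 τ) hsum_pos
        intro τ hτ
        exact hYP τ (by
          have := Finset.mem_of_mem_erase hτ
          rw [ht] at this
          simpa using this)
      have hkey : w σ0 • Y σ0 + (1 - w σ0) • z = x := by
        have hs : ∑ σ ∈ t.erase σ0, w σ = 1 - w σ0 := by
          rw [Finset.sum_erase_eq_sub hσ0t, hwt]
        have h1 : (1 - w σ0) • z = ∑ σ ∈ t.erase σ0, w σ • Y σ := by
          rw [hzdef, Finset.centerMass, hs, smul_inv_smul₀ (by linarith)]
        rw [h1, hxt]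
        exact Finset.add_sum_erase t (fun σ => w σ • Y σ) hσ0t
      have hseg : x ∈ openSegment ℝ (Y σ0) z :=
        ⟨w σ0, 1 - w σ0, hwpos, by linarith, by ring, hkey⟩
      exact (hext (Y σ0) (hYP σ0 hσ0) z hzP hseg).1
  rw [← hYeq]
  exact hY01 σ0 n0 j0
end

section
/- Let N and J be natural numbers and let P be the set of real N × J matrices x such that x(n,j) ≥ 0 for all n, j; ∑_{j} x(n,j) = 1 for every row n; and ∑_{n} x(n,j) ≤ 1 for every column j. Then a matrix x is an extreme point of P if and only if there exists an injective function σ : Fin N → Fin J such that x(n,j) = 1 if j = σ(n) and x(n,j) = 0 otherwise. In particular, if P has an extreme point then N ≤ J. -/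
open Finset

section aux
variable (N J : ℕ)

def Qset (N J : ℕ) : Set (Matrix (Fin N) (Fin J) ℝ) :=
  {x | (∀ n j, 0 ≤ x n j) ∧ (∀ n, ∑ j, x n j = 1) ∧ (∀ j, ∑ n, x n j ≤ 1)}

lemma Qconv : Convex ℝ (Qset N J) := by
  rintro x ⟨hx0, hx1, hx2⟩ y ⟨hy0, hy1, hy2⟩ a b ha hb hab
  refine ⟨fun n j => ?_, fun n => ?_, fun j => ?_⟩
  · have := hx0 n j; have := hy0 n j
    simp only [Matrix.add_apply, Matrix.smul_apply, smul_eq_mul]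
    positivity
  · simp only [Matrix.add_apply, Matrix.smul_apply, smul_eq_mul, sum_add_distrib, ← mul_sum,
      hx1 n, hy1 n]
    linarith
  · simp only [Matrix.add_apply, Matrix.smul_apply, smul_eq_mul, sum_add_distrib, ← mul_sum]
    nlinarith [hx2 j, hy2 j]

lemma entry_le_one {x : Matrix (Fin N) (Fin J) ℝ} (hx : x ∈ Qset N J) (n : Fin N) (j : Fin J) :
    x n j ≤ 1 := by
  obtain ⟨h0, h1, h2⟩ := hx
  calc x n j ≤ ∑ m, x m j := Finset.single_le_sum (fun m _ => h0 m j) (mem_univ n)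
  _ ≤ 1 := h2 j

lemma mem_Qset_of_inj {σ : Fin N → Fin J} (hσ : Function.Injective σ) :
    (fun n j => if j = σ n then (1:ℝ) else 0) ∈ Qset N J := by
  refine ⟨fun n j => by positivity, fun n => by simp, fun j => ?_⟩
  have : ∑ n, (if j = σ n then (1:ℝ) else 0) = ((univ.filter fun n => j = σ n).card : ℝ) := by
    simp [Finset.sum_boole]
  rw [this]
  have hcard : (univ.filter fun n => j = σ n).card ≤ 1 := by
    refine Finset.card_le_one.2 fun a ha b hb => ?_
    simp only [mem_filter] at ha hb
    exact hσ (ha.2.symm.trans hb.2)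
  exact_mod_cast hcard

/-- easy direction -/
lemma easy_dir {x : Matrix (Fin N) (Fin J) ℝ} {σ : Fin N → Fin J}
    (hσ : Function.Injective σ) (hx : ∀ n j, x n j = if j = σ n then 1 else 0) :
    x ∈ Set.extremePoints ℝ (Qset N J) := by
  have hxQ : x ∈ Qset N J := by
    have : x = fun n j => if j = σ n then (1:ℝ) else 0 := by funext n j; exact hx n j
    rw [this]; exact mem_Qset_of_inj N J hσ
  refine ⟨hxQ, fun y hy z hz hseg => ?_⟩
  obtain ⟨a, b, ha, hb, hab, habx⟩ := hseg
  have key : ∀ n j, y n j = x n j ∧ z n j = x n j := by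
    intro n j
    have he : a * y n j + b * z n j = x n j := by
      have := congrFun (congrFun habx n) j
      simpa using this
    have hy0 := hy.1 n j
    have hz0 := hz.1 n j
    have hy1 := entry_le_one N J hy n j
    have hz1 := entry_le_one N J hz n j
    rw [hx n j] at he ⊢
    by_cases h : j = σ n
    · subst h
      simp only [if_pos trivial, eq_self_iff_true, if_true] at he ⊢
      constructor <;> nlinarith
    · simp only [if_neg h] at he ⊢
      constructor <;> nlinarith
  funext n j
  · exact (key n j).1

end aux

-- hard direction, with J = N + K
lemma hard_dir (N K : ℕ) {x : Matrix (Fin N) (Fin (N + K)) ℝ}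
    (hx : x ∈ Set.extremePoints ℝ (Qset N (N + K))) :
    ∃ σ : Fin N → Fin (N + K), Function.Injective σ ∧
      ∀ n j, x n j = if j = σ n then 1 else 0 := by
  obtain ⟨h0, h1, h2⟩ := hx.1
  -- total sum
  have htot : ∑ j, ∑ n, x n j = (N : ℝ) := by
    rw [Finset.sum_comm]
    simp [h1]
  -- if K = 0 then each column sums to exactly 1
  have hcol1 : K = 0 → ∀ j, ∑ n, x n j = 1 := by
    intro hK j
    by_contra hne
    have hlt : ∑ n, x n j < 1 := lt_of_le_of_ne (h2 j) hne
    have : ∑ j : Fin (N + K), ∑ n, x n j < ∑ j : Fin (N + K), (1:ℝ) := by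
      refine Finset.sum_lt_sum (fun i _ => h2 i) ⟨j, mem_univ j, hlt⟩
    simp only [Finset.sum_const, card_univ, Fintype.card_fin, nsmul_eq_mul, mul_one] at this
    rw [htot, hK] at this
    simp at this
  -- padded matrix
  set y : Matrix (Fin (N + K)) (Fin (N + K)) ℝ :=
    fun i j => if h : (i : ℕ) < N then x ⟨i, h⟩ j else (1 - ∑ n, x n j) / K with hy
  have hyx : ∀ (n : Fin N) (j), y (Fin.castAdd K n) j = x n j := by
    intro n j
    simp only [hy]
    rw [dif_pos (by simpa using n.isLt)]
    exact congrFun (congrArg x (Fin.ext (by simp))) j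
  have hyK : ∀ (i : Fin K) (j), y (Fin.natAdd N i) j = (1 - ∑ n, x n j) / K := by
    intro i j
    simp only [hy]
    rw [dif_neg (by simp)]
  have hyds : y ∈ doublyStochastic ℝ (Fin (N + K)) := by
    rw [mem_doublyStochastic_iff_sum]
    refine ⟨fun i j => ?_, fun i => ?_, fun j => ?_⟩
    · simp only [hy]
      split
      · exact h0 _ _
      · next h =>
        have hK : 0 < K := by omega
        have : (0:ℝ) < K := by exact_mod_cast hK
        have hnum : (0:ℝ) ≤ 1 - ∑ n, x n j := by linarith [h2 j]
        exact div_nonneg hnum this.le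
    · by_cases h : (i : ℕ) < N
      · have : i = Fin.castAdd K ⟨i, h⟩ := by ext; simp
        rw [this]
        simp only [hyx]
        exact h1 _
      · have hiK : (i : ℕ) - N < K := by omega
        have : i = Fin.natAdd N ⟨(i : ℕ) - N, hiK⟩ := by ext; simp; omega
        rw [this]
        simp only [hyK]
        rw [← Finset.sum_div, Finset.sum_sub_distrib, htot]
        simp only [Finset.sum_const, card_univ, Fintype.card_fin, nsmul_eq_mul, mul_one]
        have hK : 0 < K := by omega
        have hK' : (0:ℝ) < K := by exact_mod_cast hK
        push_cast
        field_simp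
        ring
    · rw [Fin.sum_univ_add]
      simp only [hyx, hyK]
      rcases Nat.eq_zero_or_pos K with hK | hK
      · subst hK
        simpa using hcol1 rfl j
      · have hK' : (0:ℝ) < K := by exact_mod_cast hK
        simp only [Finset.sum_const, card_univ, Fintype.card_fin, nsmul_eq_mul]
        field_simp
        ring
  -- Birkhoff
  obtain ⟨w, hw0, hw1, hwsum⟩ := exists_eq_sum_perm_of_mem_doublyStochastic hyds
  -- candidate matrices
  set p : Equiv.Perm (Fin (N + K)) → Matrix (Fin N) (Fin (N + K)) ℝ :=
    fun σ n j => if σ (Fin.castAdd K n) = j then 1 else 0 with hp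
  have hpQ : ∀ σ, p σ ∈ Qset N (N + K) := by
    intro σ
    have hinj : Function.Injective (fun n : Fin N => σ (Fin.castAdd K n)) :=
      σ.injective.comp (Fin.castAdd_injective N K)
    have := mem_Qset_of_inj N (N + K) hinj
    convert this using 3 with n j
    simp [hp, eq_comm]
    exact Iff.rfl
  have hxsum : x = ∑ σ, w σ • p σ := by
    funext n j
    have := congrFun (congrFun hwsum (Fin.castAdd K n)) j
    rw [hyx] at this
    rw [← this]
    simp only [Matrix.sum_apply, Matrix.smul_apply, smul_eq_mul, hp]
    refine Finset.sum_congr rfl fun σ _ => ?_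
    congr 1
    simp [Equiv.Perm.permMatrix, PEquiv.toMatrix_apply, Equiv.toPEquiv_apply, Option.mem_def]
  -- extreme point: some p σ with positive weight equals x
  have hext : ∃ σ, w σ ≠ 0 ∧ p σ = x := by
    by_contra hcon
    push_neg at hcon
    have hxe := (Qconv N (N + K)).mem_extremePoints_iff_mem_diff_convexHull_diff.1 hx
    refine hxe.2 ?_
    set s : Finset (Equiv.Perm (Fin (N + K))) := univ.filter (fun σ => w σ ≠ 0) with hs
    have hsum' : ∑ σ ∈ s, w σ = 1 := by
      rw [hs, Finset.sum_filter_of_ne (fun σ _ h => h)]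
      exact hw1
    have hxs : x = s.centerMass w p := by
      rw [Finset.centerMass_eq_of_sum_1 _ _ hsum', hxsum]
      rw [Finset.sum_filter_of_ne]
      intro σ _ h
      intro hw
      exact h (by rw [hw, zero_smul])
    have hmem : s.centerMass w p ∈ convexHull ℝ (Qset N (N + K) \ {x}) := by
      refine Finset.centerMass_mem_convexHull _ (fun σ hσ => hw0 σ) (by rw [hsum']; norm_num)
        fun σ hσ => ?_
      simp only [hs, mem_filter] at hσ
      exact ⟨hpQ σ, fun hm => hcon σ hσ.2 (by simpa using hm)⟩
    rwa [← hxs] at hmem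
  obtain ⟨σ, -, hpx⟩ := hext
  refine ⟨fun n => σ (Fin.castAdd K n), σ.injective.comp (Fin.castAdd_injective N K),
    fun n j => ?_⟩
  rw [← hpx]
  simp [hp, eq_comm]

/-- Characterization of the extreme points of the relaxed selection polytope:
a matrix is an extreme point iff it is the 0-1 matrix of an injective assignment
`σ : Fin N → Fin J` of distinct services to requests. In particular, if the
polytope has an extreme point, then `N ≤ J`. -/
theorem stmt_9 (N J : ℕ)
    (P : Set (Matrix (Fin N) (Fin J) ℝ))
    (hP : P = {x | (∀ n j, 0 ≤ x n j) ∧ (∀ n, ∑ j, x n j = 1) ∧ (∀ j, ∑ n, x n j ≤ 1)}) :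
    (∀ x : Matrix (Fin N) (Fin J) ℝ,
      x ∈ Set.extremePoints ℝ P ↔
        ∃ σ : Fin N → Fin J, Function.Injective σ ∧
          ∀ n j, x n j = if j = σ n then 1 else 0) ∧
    ((Set.extremePoints ℝ P).Nonempty → N ≤ J) := by
  have hPQ : P = Qset N J := hP
  subst hPQ
  have hmain : ∀ x : Matrix (Fin N) (Fin J) ℝ,
      x ∈ Set.extremePoints ℝ (Qset N J) ↔
        ∃ σ : Fin N → Fin J, Function.Injective σ ∧
          ∀ n j, x n j = if j = σ n then 1 else 0 := by
    intro x
    constructor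
    · intro hx
      obtain ⟨h0, h1, h2⟩ := hx.1
      have hNJ : (N : ℝ) ≤ J := by
        have heq : ∑ j : Fin J, ∑ n : Fin N, x n j = (N : ℝ) := by
          rw [Finset.sum_comm]; simp [h1]
        have hle : ∑ j : Fin J, ∑ n : Fin N, x n j ≤ ∑ j : Fin J, (1 : ℝ) :=
          Finset.sum_le_sum fun j _ => h2 j
        simp only [Finset.sum_const, card_univ, Fintype.card_fin, nsmul_eq_mul,
          mul_one] at hle
        linarith
      have hNJ' : N ≤ J := by exact_mod_cast hNJ
      obtain ⟨K, rfl⟩ : ∃ K, J = N + K := ⟨J - N, (Nat.add_sub_cancel' hNJ').symm⟩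
      exact hard_dir N K hx
    · rintro ⟨σ, hσ, hxe⟩
      exact easy_dir N J hσ hxe
  refine ⟨hmain, ?_⟩
  rintro ⟨x, hx⟩
  obtain ⟨σ, hσ, -⟩ := (hmain x).1 hx
  simpa using Fintype.card_le_of_injective σ hσ
end
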